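/- Let G be an infinite tree in which every vertex has degree q+1 for some q ≥ 1, equipped with positive symmetric edge weights ℓ, and suppose there is a constant c > 0 such that for every injective sequence of vertices (v_n)_{n∈ℕ} with v_n adjacent to v_{n+1} for all n, the edge lengths ℓ(v_n, v_{n+1}) converge to c as n → ∞. If the tree equation of motion holds at every edge of G, then ℓ(e) = c for every edge e of G. -/

import Mathlib

open Finset

/-- `cv G ℓ i = Σ_{k ∼ i} 1/ℓ(i,k)`. -/
noncomputable def cv {V : Type*} (G : SimpleGraph V) [G.LocallyFinite]
    (ℓ : V → V → ℝ) (i : V) : ℝ :=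
  ∑ k ∈ G.neighborFinset i, (ℓ i k)⁻¹

/-- `dv G ℓ i = Σ_{k ∼ i} 1/ℓ(i,k)²`. -/
noncomputable def dv {V : Type*} (G : SimpleGraph V) [G.LocallyFinite]
    (ℓ : V → V → ℝ) (i : V) : ℝ :=
  ∑ k ∈ G.neighborFinset i, ((ℓ i k)⁻¹) ^ 2

/-- The tree equation of motion at the edge `{i,j}`. -/
def tEoM {V : Type*} (G : SimpleGraph V) [G.LocallyFinite]
    (ℓ : V → V → ℝ) (i j : V) : Prop :=
  (ℓ i j)⁻¹ * ((cv G ℓ i / dv G ℓ i) ^ 2 + (cv G ℓ j / dv G ℓ j) ^ 2)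
    - cv G ℓ i / dv G ℓ i - cv G ℓ j / dv G ℓ j = 0

lemma nonbacktracking_injective' {V : Type*} {G : SimpleGraph V} (hacyc : G.IsAcyclic)
    (v : ℕ → V) (hadj : ∀ n, G.Adj (v n) (v (n + 1)))
    (hnb : ∀ n, v (n + 2) ≠ v n) : Function.Injective v := by
  classical
  have hunique := SimpleGraph.isAcyclic_iff_path_unique.mp hacyc
  let W : (n : ℕ) → G.Walk (v 0) (v n) := fun n =>
    Nat.rec SimpleGraph.Walk.nil (fun m p => p.concat (hadj m)) n
  have hW0 : W 0 = SimpleGraph.Walk.nil := rfl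
  have hWsucc : ∀ n, W (n + 1) = (W n).concat (hadj n) := fun n => rfl
  have hWlen : ∀ n, (W n).length = n := by
    intro n
    induction n with
    | zero => rfl
    | succ m ih => rw [hWsucc, SimpleGraph.Walk.length_concat, ih]
  have key : ∀ n, (W n).IsPath ∧ (∀ x, x ∈ (W n).support ↔ ∃ m ≤ n, v m = x) := by
    intro n
    induction n using Nat.strong_induction_on with
    | _ n key =>
    match n with
    | 0 =>
      refine ⟨hW0 ▸ SimpleGraph.Walk.IsPath.nil, ?_⟩
      intro x
      rw [hW0, SimpleGraph.Walk.support_nil, List.mem_singleton]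
      constructor
      · rintro rfl; exact ⟨0, le_refl _, rfl⟩
      · rintro ⟨m, hm, rfl⟩
        have : m = 0 := by omega
        rw [this]
    | (k + 1) =>
      obtain ⟨ihp, ihs⟩ := key k (by omega)
      have hsupp : (W (k+1)).support = (W k).support.concat (v (k+1)) := by
        rw [hWsucc, SimpleGraph.Walk.support_concat, List.concat_eq_append]
      have hnotmem : v (k+1) ∉ (W k).support := by
        intro hmem
        obtain ⟨m, hm, hvm⟩ := (ihs _).mp hmem
        rcases Nat.lt_or_ge m k with hlt | hge
        · rcases Nat.lt_or_ge m (k-1) with hlt2 | hge2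
          · -- m + 2 ≤ k : path uniqueness argument
            have hmn : m + 2 ≤ k := by omega
            have hmem' : v m ∈ (W k).support := (ihs _).mpr ⟨m, by omega, rfl⟩
            set T := (W k).takeUntil (v m) hmem' with hT
            set D := (W k).dropUntil (v m) hmem' with hD
            have hTD : T.append D = W k := (W k).take_spec hmem'
            have hTpath : T.IsPath := ihp.takeUntil hmem'
            have hDpath : D.IsPath := ihp.dropUntil hmem'
            have hadj' : G.Adj (v m) (v k) := by
              have := (hadj k).symm
              rwa [← hvm] at this
            have hDeq : D = (SimpleGraph.Path.singleton hadj' : G.Path (v m) (v k)).1 :=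
              congrArg Subtype.val (hunique ⟨D, hDpath⟩ (SimpleGraph.Path.singleton hadj'))
            have hDlen : D.length = 1 := by rw [hDeq]; rfl
            have hTlen : T.length = k - 1 := by
              have := congrArg SimpleGraph.Walk.length hTD
              rw [SimpleGraph.Walk.length_append, hWlen, hDlen] at this
              omega
            have hWm : (W m).IsPath := (key m (by omega)).1
            have hTeq : T = W m :=
              congrArg Subtype.val (hunique ⟨T, hTpath⟩ ⟨W m, hWm⟩)
            have : T.length = m := by rw [hTeq, hWlen]
            omega
          · have hm1 : m = k - 1 := by omega
            have hb := hnb (k-1)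
            have hn1 : k - 1 + 2 = k + 1 := by omega
            rw [hn1] at hb
            exact hb (by rw [← hvm, hm1])
        · have hmk : m = k := by omega
          exact (hadj k).ne (hmk ▸ hvm)
      constructor
      · rw [SimpleGraph.Walk.isPath_def, hsupp, List.concat_eq_append,
          List.nodup_append]
        refine ⟨ihp.support_nodup, List.nodup_singleton _, ?_⟩
        intro a ha b hb
        rw [List.mem_singleton] at hb
        subst hb
        exact fun hab => hnotmem (hab ▸ ha)
      · intro x
        rw [hsupp, List.concat_eq_append, List.mem_append, List.mem_singleton]
        constructor
        · rintro (hx | rfl)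
          · obtain ⟨m, hm, hvm⟩ := (ihs x).mp hx
            exact ⟨m, by omega, hvm⟩
          · exact ⟨k+1, le_refl _, rfl⟩
        · rintro ⟨m, hm, rfl⟩
          rcases Nat.lt_or_ge m (k+1) with h | h
          · exact Or.inl ((ihs _).mpr ⟨m, by omega, rfl⟩)
          · have : m = k + 1 := by omega
            subst this; exact Or.inr rfl
  intro a b hab
  by_contra hne
  wlog h : a < b generalizing a b
  · exact this hab.symm (Ne.symm hne) (by omega)
  obtain ⟨n, rfl⟩ : ∃ n, b = n + 1 := ⟨b - 1, by omega⟩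
  have hmem : v (n+1) ∈ (W n).support := ((key n).2 _).mpr ⟨a, by omega, hab⟩
  have hpath := (key (n+1)).1
  have hsupp : (W (n+1)).support = (W n).support.concat (v (n+1)) := by
    rw [hWsucc, SimpleGraph.Walk.support_concat, List.concat_eq_append]
  rw [SimpleGraph.Walk.isPath_def, hsupp, List.concat_eq_append,
    List.nodup_append] at hpath
  exact hpath.2.2 _ hmem _ (List.mem_singleton_self _) rfl

lemma build_seq' {V : Type*} {G : SimpleGraph V} (hacyc : G.IsAcyclic)
    (P : V → V → Prop) (hPadj : ∀ i j, P i j → G.Adj i j)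
    (hstep : ∀ i j, P i j → ∃ k, P j k ∧ k ≠ i)
    {i j : V} (hij : P i j) :
    ∃ v : ℕ → V, (∀ n, P (v n) (v (n + 1))) ∧ Function.Injective v := by
  classical
  choose F hF1 hF2 using fun (p : {p : V × V // P p.1 p.2}) => hstep p.1.1 p.1.2 p.2
  let S : ℕ → {p : V × V // P p.1 p.2} := fun n =>
    Nat.rec ⟨(i, j), hij⟩ (fun _ p => ⟨(p.1.2, F p), hF1 p⟩) n
  let v : ℕ → V := fun n => (S n).1.1
  have hvs : ∀ n, v (n + 1) = (S n).1.2 := fun n => rfl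
  have hP : ∀ n, P (v n) (v (n + 1)) := fun n => by rw [hvs]; exact (S n).2
  have hnb : ∀ n, v (n + 2) ≠ v n := fun n => hF2 (S n)
  exact ⟨v, hP, nonbacktracking_injective' hacyc v (fun n => hPadj _ _ (hP n)) hnb⟩

theorem asymptotically_constant_unique_solution {V : Type*} (G : SimpleGraph V)
    [G.LocallyFinite] [Infinite V] (hconn : G.Connected) (hacyc : G.IsAcyclic)
    (q : ℕ) (hq : 1 ≤ q) (hdeg : ∀ v, G.degree v = q + 1)
    (ℓ : V → V → ℝ) (hsymm : ∀ u v, ℓ u v = ℓ v u)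
    (hpos : ∀ u v, G.Adj u v → 0 < ℓ u v)
    (c : ℝ) (hc : 0 < c)
    (hasym : ∀ v : ℕ → V, Function.Injective v → (∀ n, G.Adj (v n) (v (n + 1))) →
      Filter.Tendsto (fun n => ℓ (v n) (v (n + 1))) Filter.atTop (nhds c))
    (heom : ∀ i j, G.Adj i j → tEoM G ℓ i j) :
    ∀ i j, G.Adj i j → ℓ i j = c := by
  classical
  set u : V → ℝ := fun x => cv G ℓ x / dv G ℓ x with hu
  -- nonempty neighborhoods
  have hnonempty : ∀ j : V, (G.neighborFinset j).Nonempty := by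
    intro j
    rw [← Finset.card_pos, G.card_neighborFinset_eq_degree, hdeg]
    omega
  have hdvpos : ∀ j : V, 0 < dv G ℓ j := by
    intro j
    apply Finset.sum_pos _ (hnonempty j)
    intro k hk
    have := hpos j k ((G.mem_neighborFinset j k).mp hk)
    positivity
  have hcvpos : ∀ j : V, 0 < cv G ℓ j := by
    intro j
    apply Finset.sum_pos _ (hnonempty j)
    intro k hk
    have := hpos j k ((G.mem_neighborFinset j k).mp hk)
    positivity
  have hupos : ∀ j : V, 0 < u j := fun j => div_pos (hcvpos j) (hdvpos j)
  -- the edge equation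
  have hedge : ∀ i j, G.Adj i j → (u i) ^ 2 + (u j) ^ 2 = ℓ i j * (u i + u j) := by
    intro i j hij
    have h := heom i j hij
    rw [tEoM] at h
    have hl := hpos i j hij
    have hl' : ℓ i j ≠ 0 := ne_of_gt hl
    have hdi : dv G ℓ i ≠ 0 := ne_of_gt (hdvpos i)
    have hdj : dv G ℓ j ≠ 0 := ne_of_gt (hdvpos j)
    rw [hu]
    simp only
    field_simp at h ⊢
    linarith
  -- the vertex lemmas
  have hvertex_up : ∀ j, (∀ k ∈ G.neighborFinset j, ℓ j k ≤ u j) →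
      ∀ k ∈ G.neighborFinset j, ℓ j k = u j := by
    intro j hall
    have hd := hdvpos j
    have hsum : ∑ k ∈ G.neighborFinset j, ((ℓ j k)⁻¹) ^ 2 * (u j - ℓ j k) = 0 := by
      have h2 : ∑ k ∈ G.neighborFinset j, ((ℓ j k)⁻¹) ^ 2 * ℓ j k = cv G ℓ j := by
        apply Finset.sum_congr rfl
        intro k hk
        have hk' : ℓ j k ≠ 0 := ne_of_gt (hpos j k ((G.mem_neighborFinset j k).mp hk))
        field_simp [sq]
      simp only [mul_sub]
      rw [Finset.sum_sub_distrib, ← Finset.sum_mul, h2]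
      show dv G ℓ j * u j - cv G ℓ j = 0
      rw [hu]
      field_simp
      ring
    intro k hk
    have hterm := (Finset.sum_eq_zero_iff_of_nonneg ?_).mp hsum k hk
    · have hwpos : (0:ℝ) < ((ℓ j k)⁻¹) ^ 2 := by
        have := hpos j k ((G.mem_neighborFinset j k).mp hk)
        positivity
      have : u j - ℓ j k = 0 := by
        rcases mul_eq_zero.mp hterm with h | h
        · exact absurd h (ne_of_gt hwpos)
        · exact h
      linarith
    · intro m hm
      have hwpos : (0:ℝ) ≤ ((ℓ j m)⁻¹) ^ 2 := sq_nonneg _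
      have := hall m hm
      have : 0 ≤ u j - ℓ j m := by linarith
      positivity
  have hvertex_down : ∀ j, (∀ k ∈ G.neighborFinset j, u j ≤ ℓ j k) →
      ∀ k ∈ G.neighborFinset j, ℓ j k = u j := by
    intro j hall
    have hd := hdvpos j
    have hsum : ∑ k ∈ G.neighborFinset j, ((ℓ j k)⁻¹) ^ 2 * (ℓ j k - u j) = 0 := by
      have h2 : ∑ k ∈ G.neighborFinset j, ((ℓ j k)⁻¹) ^ 2 * ℓ j k = cv G ℓ j := by
        apply Finset.sum_congr rfl
        intro k hk
        have hk' : ℓ j k ≠ 0 := ne_of_gt (hpos j k ((G.mem_neighborFinset j k).mp hk))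
        field_simp [sq]
      simp only [mul_sub]
      rw [Finset.sum_sub_distrib, ← Finset.sum_mul, h2]
      show cv G ℓ j - dv G ℓ j * u j = 0
      rw [hu]
      field_simp
      ring
    intro k hk
    have hterm := (Finset.sum_eq_zero_iff_of_nonneg ?_).mp hsum k hk
    · have hwpos : (0:ℝ) < ((ℓ j k)⁻¹) ^ 2 := by
        have := hpos j k ((G.mem_neighborFinset j k).mp hk)
        positivity
      have : ℓ j k - u j = 0 := by
        rcases mul_eq_zero.mp hterm with h | h
        · exact absurd h (ne_of_gt hwpos)
        · exact h
      linarith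
    · intro m hm
      have := hall m hm
      have h0 : 0 ≤ ℓ j m - u j := by linarith
      positivity
  -- picking a second neighbor
  have hpick : ∀ (j i : V), ∃ k ∈ G.neighborFinset j, k ≠ i := by
    intro j i
    apply Finset.exists_mem_ne
    rw [G.card_neighborFinset_eq_degree, hdeg]
    omega
  -- step lemmas
  have hstep_up : ∀ i j, G.Adj i j → ℓ i j ≤ u j →
      ∃ k, G.Adj j k ∧ k ≠ i ∧ ℓ i j ≤ ℓ j k ∧ ℓ j k ≤ u k := by
    intro i j hij hle
    by_cases hex : ∃ k ∈ G.neighborFinset j, u j < ℓ j k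
    · obtain ⟨k, hk, hlt⟩ := hex
      have hadjk : G.Adj j k := (G.mem_neighborFinset j k).mp hk
      have hkne : k ≠ i := by
        intro hki
        rw [hki, hsymm j i] at hlt
        linarith
      have he := hedge j k hadjk
      have huj := hupos j
      have huk := hupos k
      have hlk : ℓ j k ≤ u k := by
        nlinarith [mul_pos (sub_pos.mpr hlt) huj]
      exact ⟨k, hadjk, hkne, by linarith, hlk⟩
    · push_neg at hex
      have hall := hvertex_up j hex
      obtain ⟨k, hk, hkne⟩ := hpick j i
      have hadjk : G.Adj j k := (G.mem_neighborFinset j k).mp hk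
      have hlk : ℓ j k = u j := hall k hk
      have he := hedge j k hadjk
      have huj := hupos j
      have huk := hupos k
      have hueq : u k = u j := by
        have h0 : u k * (u k - u j) = 0 := by nlinarith
        rcases mul_eq_zero.mp h0 with h | h
        · exact absurd h (ne_of_gt huk)
        · linarith
      exact ⟨k, hadjk, hkne, by linarith, by linarith⟩
  have hstep_down : ∀ i j, G.Adj i j → u j ≤ ℓ i j →
      ∃ k, G.Adj j k ∧ k ≠ i ∧ ℓ j k ≤ ℓ i j ∧ u k ≤ ℓ j k := by
    intro i j hij hle
    by_cases hex : ∃ k ∈ G.neighborFinset j, ℓ j k < u j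
    · obtain ⟨k, hk, hlt⟩ := hex
      have hadjk : G.Adj j k := (G.mem_neighborFinset j k).mp hk
      have hkne : k ≠ i := by
        intro hki
        rw [hki, hsymm j i] at hlt
        linarith
      have he := hedge j k hadjk
      have huj := hupos j
      have huk := hupos k
      have hlk : u k ≤ ℓ j k := by
        nlinarith [mul_pos (sub_pos.mpr hlt) huj]
      exact ⟨k, hadjk, hkne, by linarith, hlk⟩
    · push_neg at hex
      have hall := hvertex_down j hex
      obtain ⟨k, hk, hkne⟩ := hpick j i
      have hadjk : G.Adj j k := (G.mem_neighborFinset j k).mp hk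
      have hlk : ℓ j k = u j := hall k hk
      have he := hedge j k hadjk
      have huj := hupos j
      have huk := hupos k
      have hueq : u k = u j := by
        have h0 : u k * (u k - u j) = 0 := by nlinarith
        rcases mul_eq_zero.mp h0 with h | h
        · exact absurd h (ne_of_gt huk)
        · linarith
      exact ⟨k, hadjk, hkne, by linarith, by linarith⟩
  
  -- main contradiction arguments
  have main_up : ∀ i j, G.Adj i j → ℓ i j ≤ u j → c < ℓ i j → False := by
    intro i j hij hle hgt
    set L := ℓ i j with hL
    have hP : ∀ a b, (G.Adj a b ∧ ℓ a b ≤ u b ∧ L ≤ ℓ a b) →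
        ∃ k, (G.Adj b k ∧ ℓ b k ≤ u k ∧ L ≤ ℓ b k) ∧ k ≠ a := by
      rintro a b ⟨hab, hble, hLle⟩
      obtain ⟨k, h1, h2, h3, h4⟩ := hstep_up a b hab hble
      exact ⟨k, ⟨h1, h4, le_trans hLle h3⟩, h2⟩
    obtain ⟨v, hPv, hinj⟩ := build_seq' hacyc
      (fun a b => G.Adj a b ∧ ℓ a b ≤ u b ∧ L ≤ ℓ a b)
      (fun a b h => h.1) hP ⟨hij, hle, le_refl L⟩
    have htend := hasym v hinj (fun n => (hPv n).1)
    have : L ≤ c := ge_of_tendsto htend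
      (Filter.Eventually.of_forall (fun n => (hPv n).2.2))
    linarith
  have main_down : ∀ i j, G.Adj i j → u j ≤ ℓ i j → ℓ i j < c → False := by
    intro i j hij hle hlt
    set L := ℓ i j with hL
    have hP : ∀ a b, (G.Adj a b ∧ u b ≤ ℓ a b ∧ ℓ a b ≤ L) →
        ∃ k, (G.Adj b k ∧ u k ≤ ℓ b k ∧ ℓ b k ≤ L) ∧ k ≠ a := by
      rintro a b ⟨hab, hble, hLle⟩
      obtain ⟨k, h1, h2, h3, h4⟩ := hstep_down a b hab hble
      exact ⟨k, ⟨h1, h4, le_trans h3 hLle⟩, h2⟩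
    obtain ⟨v, hPv, hinj⟩ := build_seq' hacyc
      (fun a b => G.Adj a b ∧ u b ≤ ℓ a b ∧ ℓ a b ≤ L)
      (fun a b h => h.1) hP ⟨hij, hle, le_refl L⟩
    have htend := hasym v hinj (fun n => (hPv n).1)
    have : c ≤ L := le_of_tendsto htend
      (Filter.Eventually.of_forall (fun n => (hPv n).2.2))
    linarith
  -- conclude
  intro i j hij
  by_contra hne
  have he := hedge i j hij
  have hui := hupos i
  have huj := hupos j
  have hl := hpos i j hij
  rcases lt_or_gt_of_ne hne with hlt | hgt
  · have hmin : u i ≤ ℓ i j ∨ u j ≤ ℓ i j := by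
      by_contra hcon
      push_neg at hcon
      obtain ⟨h1, h2⟩ := hcon
      nlinarith [mul_pos (sub_pos.mpr h1) hui, mul_pos (sub_pos.mpr h2) huj]
    rcases hmin with h | h
    · exact main_down j i hij.symm (by rwa [← hsymm i j]) (by rwa [← hsymm i j])
    · exact main_down i j hij h hlt
  · have hmax : ℓ i j ≤ u i ∨ ℓ i j ≤ u j := by
      by_contra hcon
      push_neg at hcon
      obtain ⟨h1, h2⟩ := hcon
      nlinarith [mul_pos (sub_pos.mpr h1) hui, mul_pos (sub_pos.mpr h2) huj]
    rcases hmax with h | h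
    · exact main_up j i hij.symm (by rwa [← hsymm i j]) (by rwa [← hsymm i j])
    · exact main_up i j hij h hgt
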